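/- Fix μ ∈ (0, 1). Then, as n̄ → ∞ along the reals, the function n̄ ↦ 1/((1+2n̄)² - 4μ²·n̄·(1+n̄)) - 9/(( √(4·(1+2n̄)² - 12μ²·n̄·(1+n̄)) + (1+2n̄) )²) tends to 0. -/

import Mathlib

open Filter Real

theorem stmt_14 (μ : ℝ) (hμ : μ ∈ Set.Ioo (0 : ℝ) 1) :
    Filter.Tendsto
      (fun n : ℝ => 1 / ((1 + 2 * n) ^ 2 - 4 * μ ^ 2 * n * (1 + n)) -
          9 / (Real.sqrt (4 * (1 + 2 * n) ^ 2 - 12 * μ ^ 2 * n * (1 + n)) + (1 + 2 * n)) ^ 2)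
      Filter.atTop (nhds 0) := by
  obtain ⟨hμ0, hμ1⟩ := hμ
  have hc : (0:ℝ) < 4 * (1 - μ ^ 2) := by nlinarith
  have hsq : Tendsto (fun n : ℝ => n ^ 2 + n) atTop atTop := by
    exact Tendsto.atTop_add_atTop (tendsto_pow_atTop two_ne_zero) tendsto_id
  have h1 : Tendsto (fun n : ℝ => 1 / ((1 + 2 * n) ^ 2 - 4 * μ ^ 2 * n * (1 + n)))
      atTop (nhds 0) := by
    have key : ∀ n : ℝ, (1 + 2 * n) ^ 2 - 4 * μ ^ 2 * n * (1 + n)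
        = 4 * (1 - μ ^ 2) * (n ^ 2 + n) + 1 := by intro n; ring
    simp only [key]
    have ht : Tendsto (fun n : ℝ => 4 * (1 - μ ^ 2) * (n ^ 2 + n) + 1) atTop atTop :=
      tendsto_atTop_add_const_right _ 1 (hsq.const_mul_atTop hc)
    simpa [one_div, Pi.inv_def] using ht.inv_tendsto_atTop
  have h2 : Tendsto (fun n : ℝ =>
      9 / (Real.sqrt (4 * (1 + 2 * n) ^ 2 - 12 * μ ^ 2 * n * (1 + n)) + (1 + 2 * n)) ^ 2)
      atTop (nhds 0) := by
    have hbound : Tendsto (fun n : ℝ => 9 / (1 + 2 * n) ^ 2) atTop (nhds 0) := by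
      have ht : Tendsto (fun n : ℝ => (1 + 2 * n) ^ 2) atTop atTop := by
        have : Tendsto (fun n : ℝ => 1 + 2 * n) atTop atTop :=
          tendsto_atTop_add_const_left _ 1 (tendsto_id.const_mul_atTop (by norm_num))
        exact (tendsto_pow_atTop two_ne_zero).comp this
      simpa [div_eq_mul_inv] using (ht.inv_tendsto_atTop).const_mul 9
    refine tendsto_of_tendsto_of_tendsto_of_le_of_le' tendsto_const_nhds hbound ?_ ?_
    · filter_upwards [eventually_ge_atTop (0:ℝ)] with n hn
      have hpos : (0:ℝ) < 1 + 2 * n := by linarith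
      positivity
    · filter_upwards [eventually_ge_atTop (0:ℝ)] with n hn
      have hpos : (0:ℝ) < 1 + 2 * n := by linarith
      have hs : 0 ≤ Real.sqrt (4 * (1 + 2 * n) ^ 2 - 12 * μ ^ 2 * n * (1 + n)) :=
        Real.sqrt_nonneg _
      have hle : (1 + 2 * n) ^ 2
          ≤ (Real.sqrt (4 * (1 + 2 * n) ^ 2 - 12 * μ ^ 2 * n * (1 + n)) + (1 + 2 * n)) ^ 2 := by
        nlinarith
      exact div_le_div_of_nonneg_left (by norm_num) (by positivity) hle
  simpa using h1.sub h2
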